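/- Let Γ be a finite unsigned GKM₃ graph with an acyclic orientation o : E → {±1} of its edges such that b₄(F,o) = 1 holds for every 2-face F of Γ (i.e., every 2-face has a unique vertex of index 2 with respect to the induced orientation). Then the conjugated 2-faces of Γ generate the fundamental group π₁(Γ,v) for any base vertex v. -/

import Mathlib

attribute [local instance] Classical.propDecidable

/-- A graph with directed edges `E`, vertices `V`, edge reversal, and a
(combinatorial) connection `conn`, where `conn e e'` is the transport of an
edge `e'` with `ini e' = ini e` along the edge `e`. -/
structure ConnGraph (V : Type*) (E : Type*) where
  ini : E → V
  ter : E → V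
  rev : E → E
  rev_ini : ∀ e, ini (rev e) = ter e
  rev_ter : ∀ e, ter (rev e) = ini e
  rev_rev : ∀ e, rev (rev e) = e
  conn : E → E → E
  conn_ini : ∀ e e', ini e' = ini e → ini (conn e e') = ter e
  conn_self : ∀ e, conn e e = rev e
  conn_inv : ∀ e e', ini e' = ini e → conn (rev e) (conn e e') = e'

namespace ConnGraph

variable {V E : Type*} (G : ConnGraph V E)

/-- One step of adjacency along an edge. -/
def Step (a b : V) : Prop := ∃ e : E, G.ini e = a ∧ G.ter e = b

/-- The graph is connected. -/
def Connected : Prop := ∀ a b : V, Relation.ReflTransGen G.Step a b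

/-- The graph is `n`-valent: every star has exactly `n` edges. -/
def NValent (n : ℕ) : Prop := ∀ v : V, {e : E | G.ini e = v}.ncard = n

/-- A sign function on a graph with connection: `ε e e'` plays the role of
`⟨ε(e), e'⟩` for `e'` in the star of `ini e`. -/
def IsSignFunction (ε : E → E → ℤ) : Prop :=
  (∀ e e' : E, G.ini e' = G.ini e → ε e e' = 1 ∨ ε e e' = -1) ∧
  (∀ e : E, ε e e = 1) ∧
  (∀ e e' : E, G.ini e' = G.ini e → ε (G.rev e) (G.conn e e') = ε e e')

/-- An invariant function (relative to a sign function): `c e e'` plays the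
role of `⟨c(e), e'⟩`. -/
def IsInvariantFunction (ε c : E → E → ℤ) : Prop :=
  (∀ e : E, c e e = -2) ∧
  (∀ e e' : E, G.ini e' = G.ini e →
    c e e' = ε (G.rev e) (G.conn e e') * c (G.rev e) (G.conn e e'))

/-- A label function: an element of the group `L(Γ)`. -/
def IsLabelFunction (ε c : E → E → ℤ) (a : E → ℤ) : Prop :=
  ∀ e e' : E, G.ini e' = G.ini e →
    a (G.conn e e') = ε e e' * a e' + c e e' * a e

/-- `x : E → ℤ` represents an element of `ℤ star(v)`:
it is supported on the star of `v`. -/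
def StarSupported (v : V) (x : E → ℤ) : Prop := ∀ e : E, G.ini e ≠ v → x e = 0

/-- An element of the group of axial functions `A(Γ)`: a tuple `(f v)_{v ∈ V}`
with `f v ∈ ℤ star(v)`, satisfying `f (t e) = φ_e (f (i e))` for every edge. -/
def IsAxialTuple (ε c : E → E → ℤ) (f : V → E → ℤ) : Prop :=
  (∀ v : V, G.StarSupported v (f v)) ∧
  (∀ e e' : E, G.ini e' = G.ini e →
    f (G.ter e) (G.conn e e') = ε e e' * f (G.ini e) e' + f (G.ini e) e * c e e')

/-- The map `φ_e : ℤ star(i e) → ℤ star(t e)`,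
`φ_e(x) = ∇_e (ε(e)·x + ⟨x, e⟩·c(e))`. -/
noncomputable def phi (ε c : E → E → ℤ) (e : E) (x : E → ℤ) : E → ℤ := fun e'' =>
  if G.ini e'' = G.ter e then
    ε e (G.conn (G.rev e) e'') * x (G.conn (G.rev e) e'') +
      x e * c e (G.conn (G.rev e) e'')
  else 0

/-- `φ_γ` for an edge path `γ = (e₁, …, e_q)`: the composite
`φ_{e_q} ∘ ⋯ ∘ φ_{e₁}`. -/
noncomputable def phiList (ε c : E → E → ℤ) : List E → (E → ℤ) → (E → ℤ)
  | [], x => x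
  | e :: l, x => phiList ε c l (G.phi ε c e x)

/-- The parallel transport (monodromy) operator `Π_γ = ∇_{e_q} ∘ ⋯ ∘ ∇_{e₁}`
along an edge path, on edges. -/
def transportList : List E → E → E
  | [], x => x
  | e :: l, x => transportList l (G.conn e x)

/-- `IsPath u w l`: the list of edges `l` is an edge path from `u` to `w`. -/
def IsPath : V → V → List E → Prop
  | u, w, [] => u = w
  | u, w, e :: l => G.ini e = u ∧ IsPath (G.ter e) w l

/-- Elementary homotopy of edge paths: deletion of a backtrack `(e, ē)`. -/
inductive HomotopyStep : List E → List E → Prop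
  | backtrack (l₁ l₂ : List E) (e : E) :
      HomotopyStep (l₁ ++ e :: G.rev e :: l₂) (l₁ ++ l₂)

/-- Homotopy of edge paths: the equivalence relation generated by insertion
and deletion of backtracks. -/
def Homotopic : List E → List E → Prop := Relation.EqvGen G.HomotopyStep

/-- A 2-face: a nonempty connected 2-valent subgraph (given by its set of
edges, closed under reversal) which is invariant under the connection. -/
def IsTwoFace (F : Set E) : Prop :=
  F.Nonempty ∧
  (∀ e ∈ F, G.rev e ∈ F) ∧
  (∀ e ∈ F, {e' : E | e' ∈ F ∧ G.ini e' = G.ini e}.ncard = 2) ∧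
  (∀ e ∈ F, ∀ e' ∈ F, G.ini e' = G.ini e → G.conn e e' ∈ F) ∧
  (∀ e ∈ F, ∀ e' ∈ F, ∃ l : List E,
    (∀ x ∈ l, x ∈ F) ∧ G.IsPath (G.ini e) (G.ini e') l)

/-- `f` is a boundary cycle of the 2-face `F`, based at `w`: a closed edge
path at `w` traversing each geometric edge of `F` exactly once. -/
def IsFaceBoundary (F : Set E) (w : V) (f : List E) : Prop :=
  G.IsTwoFace F ∧ f ≠ [] ∧ G.IsPath w w f ∧ (∀ e ∈ f, e ∈ F) ∧
  f.Nodup ∧ (∀ e ∈ f, G.rev e ∉ f) ∧ (∀ e ∈ F, e ∈ f ∨ G.rev e ∈ f)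

/-- A conjugated 2-face at the base vertex `v`: a loop of the form
`g · f · g⁻¹` where `g` is an edge path from `v` and `f` is a boundary cycle
of a 2-face based at the endpoint of `g`. -/
def ConjFaceLoop (v : V) (l : List E) : Prop :=
  ∃ (w : V) (g f : List E) (F : Set E),
    G.IsPath v w g ∧ G.IsFaceBoundary F w f ∧
    l = g ++ f ++ (g.reverse.map G.rev)

/-- The conjugated 2-faces generate the fundamental group (the edge-path
group): every closed edge path is homotopic to a concatenation of conjugated
2-face loops. -/
def FacesGeneratePi1 : Prop :=
  ∀ (v : V) (l : List E), G.IsPath v v l →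
    ∃ ls : List (List E), (∀ m ∈ ls, G.ConjFaceLoop v m) ∧
      G.Homotopic l ls.flatten

end ConnGraph

/-- `(G, lab)` is an abstract unsigned GKM graph, where `lab` is a chosen lift
`α̃ : E → ℤ^k` of the unsigned axial function `α : E → ℤ^k/±1`. -/
structure IsUnsignedGKM {V E : Type*} (G : ConnGraph V E) {k : ℕ}
    (lab : E → Fin k → ℤ) : Prop where
  connected : G.Connected
  lab_ne : ∀ e : E, lab e ≠ 0
  lab_rev : ∀ e : E, lab (G.rev e) = -lab e
  indep₂ : ∀ e e' : E, G.ini e' = G.ini e → e ≠ e' →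
    LinearIndependent ℚ ![(fun j => (lab e j : ℚ)), (fun j => (lab e' j : ℚ))]
  congru : ∀ e e' : E, G.ini e' = G.ini e →
    ∃ s m : ℤ, (s = 1 ∨ s = -1) ∧ lab (G.conn e e') = s • lab e' + m • lab e

/-- The GKM₃ condition: any three labels at a common vertex are linearly
independent over `ℚ`. -/
def IsGKM3 {V E : Type*} (G : ConnGraph V E) {k : ℕ} (lab : E → Fin k → ℤ) : Prop :=
  ∀ e₁ e₂ e₃ : E, G.ini e₂ = G.ini e₁ → G.ini e₃ = G.ini e₁ →
    e₁ ≠ e₂ → e₁ ≠ e₃ → e₂ ≠ e₃ →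
    LinearIndependent ℚ
      ![(fun j => (lab e₁ j : ℚ)), (fun j => (lab e₂ j : ℚ)),
        (fun j => (lab e₃ j : ℚ))]

/-- `(ε, c)` are the sign and integer data associated to the lift `lab` of the
axial function, via the congruence relation
`α̃(∇_e e') = ⟨ε(e),e'⟩·α̃(e') + ⟨c(e),e'⟩·α̃(e)`, normalized by
`⟨ε(e),e⟩ = 1` and `⟨c(e),e⟩ = -2`. -/
def IsCompatibleData {V E : Type*} (G : ConnGraph V E) {k : ℕ}
    (lab : E → Fin k → ℤ) (ε c : E → E → ℤ) : Prop :=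
  (∀ e e' : E, G.ini e' = G.ini e → ε e e' = 1 ∨ ε e e' = -1) ∧
  (∀ e : E, ε e e = 1) ∧ (∀ e : E, c e e = -2) ∧
  (∀ e e' : E, G.ini e' = G.ini e →
    lab (G.conn e e') = ε e e' • lab e' + c e e' • lab e)

/-- The axial function is almost effective: the `ℤ`-span of its image has
finite index in `ℤ^k`. -/
def AlmostEffective {E : Type*} {k : ℕ} (lab : E → Fin k → ℤ) : Prop :=
  (Submodule.span ℤ (Set.range lab)).toAddSubgroup.index ≠ 0

/-- The axial function is effective: the `ℤ`-span of its image is all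
of `ℤ^k`. -/
def Effective {E : Type*} {k : ℕ} (lab : E → Fin k → ℤ) : Prop :=
  Submodule.span ℤ (Set.range lab) = ⊤

namespace ConnGraph

variable {V E : Type*} (G : ConnGraph V E)

section PathLemmas

theorem isPath_append {u z w : V} {p q : List E} (hp : G.IsPath u z p)
    (hq : G.IsPath z w q) : G.IsPath u w (p ++ q) := by
  induction p generalizing u with
  | nil => cases hp; simpa using hq
  | cons e p ih => exact ⟨hp.1, ih hp.2⟩

theorem isPath_append_iff {u w : V} {p q : List E} :
    G.IsPath u w (p ++ q) ↔ ∃ z, G.IsPath u z p ∧ G.IsPath z w q := by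
  constructor
  · intro h
    induction p generalizing u with
    | nil => exact ⟨u, rfl, by simpa using h⟩
    | cons e p ih =>
      obtain ⟨z, hz1, hz2⟩ := ih h.2
      exact ⟨z, ⟨h.1, hz1⟩, hz2⟩
  · rintro ⟨z, hp, hq⟩; exact G.isPath_append hp hq

theorem isPath_reverse {u w : V} {p : List E} (hp : G.IsPath u w p) :
    G.IsPath w u (p.reverse.map G.rev) := by
  induction p generalizing u with
  | nil => cases hp; exact rfl
  | cons e p ih =>
    have : (e :: p).reverse.map G.rev = p.reverse.map G.rev ++ [G.rev e] := by simp
    rw [this]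
    refine G.isPath_append (ih hp.2) ?_
    exact ⟨by rw [G.rev_ini], show G.ter (G.rev e) = u by rw [G.rev_ter, hp.1]⟩

end PathLemmas

section HomotopyLemmas

theorem Homotopic.refl (l : List E) : G.Homotopic l l := Relation.EqvGen.refl l

theorem Homotopic.symm' {l₁ l₂ : List E} (h : G.Homotopic l₁ l₂) : G.Homotopic l₂ l₁ :=
  Relation.EqvGen.symm _ _ h

theorem Homotopic.trans' {l₁ l₂ l₃ : List E} (h : G.Homotopic l₁ l₂)
    (h' : G.Homotopic l₂ l₃) : G.Homotopic l₁ l₃ :=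
  Relation.EqvGen.trans _ _ _ h h'

theorem homotopic_step (X Y : List E) (e : E) :
    G.Homotopic (X ++ e :: G.rev e :: Y) (X ++ Y) :=
  Relation.EqvGen.rel _ _ (HomotopyStep.backtrack X Y e)

theorem Homotopic.append_congr {p q : List E} (h : G.Homotopic p q) (X Y : List E) :
    G.Homotopic (X ++ p ++ Y) (X ++ q ++ Y) := by
  induction h with
  | rel a b hab =>
    cases hab with
    | backtrack l₁ l₂ e =>
      have h1 : X ++ (l₁ ++ e :: G.rev e :: l₂) ++ Y
          = (X ++ l₁) ++ e :: G.rev e :: (l₂ ++ Y) := by simp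
      have h2 : X ++ (l₁ ++ l₂) ++ Y = (X ++ l₁) ++ (l₂ ++ Y) := by simp
      rw [h1, h2]
      exact G.homotopic_step _ _ _
  | refl a => exact Homotopic.refl G _
  | symm a b _ ih => exact ih.symm' G
  | trans a b c _ _ ih1 ih2 => exact (ih1.trans' G) ih2

theorem homotopic_cancel_left (X Y p : List E) :
    G.Homotopic (X ++ (p.reverse.map G.rev) ++ p ++ Y) (X ++ Y) := by
  induction p generalizing X with
  | nil => simpa using Homotopic.refl G (X ++ Y)
  | cons e p ih =>
    have h1 : X ++ ((e :: p).reverse.map G.rev) ++ (e :: p) ++ Y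
        = (X ++ p.reverse.map G.rev) ++ (G.rev e) :: (G.rev (G.rev e)) :: (p ++ Y) := by
      simp [G.rev_rev]
    rw [h1]
    refine (G.homotopic_step _ _ _).trans' G ?_
    have h2 : X ++ p.reverse.map G.rev ++ (p ++ Y) = X ++ p.reverse.map G.rev ++ p ++ Y := by
      simp
    rw [h2]
    exact ih X

theorem homotopic_cancel_right (X Y p : List E) :
    G.Homotopic (X ++ p ++ (p.reverse.map G.rev) ++ Y) (X ++ Y) := by
  induction p generalizing X Y with
  | nil => simpa using Homotopic.refl G (X ++ Y)
  | cons e p ih =>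
    have h1 : X ++ (e :: p) ++ ((e :: p).reverse.map G.rev) ++ Y
        = (X ++ [e]) ++ p ++ (p.reverse.map G.rev) ++ ((G.rev e) :: Y) := by
      simp
    rw [h1]
    refine (ih (X ++ [e]) (G.rev e :: Y)).trans' G ?_
    have h2 : X ++ [e] ++ G.rev e :: Y = X ++ e :: G.rev e :: Y := by simp
    rw [h2]
    exact G.homotopic_step X Y e

end HomotopyLemmas

end ConnGraph
namespace ConnGraph

variable {V E : Type*} (G : ConnGraph V E)

section Heights

variable (o : E → ℤ)

/-- The "goes-up" relation on vertices. -/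
def UpRel (a b : V) : Prop := ∃ e : E, o e = 1 ∧ G.ini e = a ∧ G.ter e = b

theorem upRel_transGen_path {a b : V} (h : Relation.TransGen (G.UpRel o) a b) :
    ∃ l : List E, l ≠ [] ∧ G.IsPath a b l ∧ ∀ e ∈ l, o e = 1 := by
  induction h with
  | single hr =>
    obtain ⟨e, he1, he2, he3⟩ := hr
    exact ⟨[e], by simp, ⟨he2, he3⟩, by simpa using he1⟩
  | tail _ hr ih =>
    obtain ⟨l, hl0, hl1, hl2⟩ := ih
    obtain ⟨e, he1, he2, he3⟩ := hr
    refine ⟨l ++ [e], by simp, G.isPath_append hl1 ⟨he2, he3⟩, ?_⟩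
    intro x hx
    rcases List.mem_append.1 hx with h | h
    · exact hl2 x h
    · simp at h; subst h; exact he1

variable [Fintype V]

/-- The height of a vertex: number of vertices strictly below it. -/
noncomputable def hgt (v : V) : ℕ :=
  (Finset.univ.filter (fun x => Relation.TransGen (G.UpRel o) x v)).card

theorem hgt_le_card (v : V) : G.hgt o v ≤ Fintype.card V :=
  Finset.card_filter_le _ _

theorem hgt_lt_of_upRel
    (hacyclic : ¬ ∃ (v : V) (l : List E),
      l ≠ [] ∧ G.IsPath v v l ∧ ∀ e ∈ l, o e = 1)
    {a b : V} (h : G.UpRel o a b) : G.hgt o a < G.hgt o b := by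
  classical
  apply Finset.card_lt_card
  rw [Finset.ssubset_iff_of_subset]
  · refine ⟨a, ?_, ?_⟩
    · simp only [Finset.mem_filter, Finset.mem_univ, true_and]
      exact Relation.TransGen.single h
    · simp only [Finset.mem_filter, Finset.mem_univ, true_and]
      intro hTG
      exact hacyclic ⟨a, (G.upRel_transGen_path o hTG).imp (fun l hl => by exact hl)⟩
  · intro x hx
    simp only [Finset.mem_filter, Finset.mem_univ, true_and] at hx ⊢
    exact hx.tail h

end Heights

end ConnGraph
namespace ConnGraph

variable {V E : Type*} (G : ConnGraph V E)

section EdgeFacts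

theorem rev_ne {k : ℕ} {lab : E → Fin k → ℤ} (hGKM : IsUnsignedGKM G lab) (e : E) :
    G.rev e ≠ e := by
  intro h
  have h1 := hGKM.lab_rev e
  rw [h] at h1
  apply hGKM.lab_ne e
  funext j
  have h2 := congrFun h1 j
  simp only [Pi.neg_apply] at h2
  simp only [Pi.zero_apply]
  omega

variable (o : E → ℤ) [Fintype V]

theorem hgt_lt_of_up (hacyclic : ¬ ∃ (v : V) (l : List E),
      l ≠ [] ∧ G.IsPath v v l ∧ ∀ e ∈ l, o e = 1) {e : E} (he : o e = 1) :
    G.hgt o (G.ini e) < G.hgt o (G.ter e) :=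
  G.hgt_lt_of_upRel o hacyclic ⟨e, he, rfl, rfl⟩

theorem hgt_lt_of_down (hacyclic : ¬ ∃ (v : V) (l : List E),
      l ≠ [] ∧ G.IsPath v v l ∧ ∀ e ∈ l, o e = 1)
    (horev : ∀ e : E, o (G.rev e) = -o e) {e : E} (he : o e = -1) :
    G.hgt o (G.ter e) < G.hgt o (G.ini e) := by
  have h := G.hgt_lt_of_up o hacyclic (e := G.rev e) (by rw [horev, he]; ring)
  rwa [G.rev_ini, G.rev_ter] at h

theorem ini_ne_ter (hacyclic : ¬ ∃ (v : V) (l : List E),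
      l ≠ [] ∧ G.IsPath v v l ∧ ∀ e ∈ l, o e = 1)
    (horev : ∀ e : E, o (G.rev e) = -o e)
    (ho : ∀ e : E, o e = 1 ∨ o e = -1) (e : E) : G.ini e ≠ G.ter e := by
  intro hh
  rcases ho e with h | h
  · have := G.hgt_lt_of_up o hacyclic h; rw [hh] at this; exact lt_irrefl _ this
  · have := G.hgt_lt_of_down o hacyclic horev h; rw [hh] at this; exact lt_irrefl _ this

/-- Reversal of an all-down loop gives an all-up loop: contradiction. -/
theorem no_all_down_loop (hacyclic : ¬ ∃ (v : V) (l : List E),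
      l ≠ [] ∧ G.IsPath v v l ∧ ∀ e ∈ l, o e = 1)
    (horev : ∀ e : E, o (G.rev e) = -o e) {v : V} {l : List E}
    (hne : l ≠ []) (hp : G.IsPath v v l) (hdown : ∀ e ∈ l, o e = -1) : False := by
  apply hacyclic
  refine ⟨v, l.reverse.map G.rev, by simpa using hne, G.isPath_reverse hp, ?_⟩
  intro x hx
  simp only [List.mem_map, List.mem_reverse] at hx
  obtain ⟨y, hy, rfl⟩ := hx
  rw [horev, hdown y hy]; ring

end EdgeFacts

end ConnGraph
namespace ConnGraph

variable {V E : Type*}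

/-- The connection-closure of a pair of edges: the edge set of the 2-face
generated by `d₁, d₂`. -/
inductive FaceMem (G : ConnGraph V E) (d₁ d₂ : E) : E → Prop
  | base₁ : FaceMem G d₁ d₂ d₁
  | base₂ : FaceMem G d₁ d₂ d₂
  | frev {x : E} : FaceMem G d₁ d₂ x → FaceMem G d₁ d₂ (G.rev x)
  | fconn {x y : E} : FaceMem G d₁ d₂ x → FaceMem G d₁ d₂ y → G.ini y = G.ini x →
      FaceMem G d₁ d₂ (G.conn x y)

variable (G : ConnGraph V E)

theorem conn_injective {e x y : E} (hx : G.ini x = G.ini e) (hy : G.ini y = G.ini e)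
    (h : G.conn e x = G.conn e y) : x = y := by
  have := G.conn_inv e x hx
  rw [h, G.conn_inv e y hy] at this
  exact this.symm

theorem conn_ne_rev {e y : E} (hy : G.ini y = G.ini e) (hne : y ≠ e) :
    G.conn e y ≠ G.rev e := by
  intro h
  rw [← G.conn_self e] at h
  exact hne (G.conn_injective hy rfl h)

section Face

variable {d₁ d₂ : E}

theorem faceMem_partner {x : E} (hx : FaceMem G d₁ d₂ x) (hne : d₁ ≠ d₂)
    (hini : G.ini d₂ = G.ini d₁) :
    ∃ y, FaceMem G d₁ d₂ y ∧ G.ini y = G.ini x ∧ y ≠ x := by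
  induction hx with
  | base₁ => exact ⟨d₂, FaceMem.base₂, by rw [hini], fun h => hne h.symm⟩
  | base₂ => exact ⟨d₁, FaceMem.base₁, by rw [hini], hne⟩
  | @frev x hx ih =>
    obtain ⟨p, hp1, hp2, hp3⟩ := ih
    refine ⟨G.conn _ p, FaceMem.fconn hx hp1 hp2, ?_, ?_⟩
    · rw [G.conn_ini _ p hp2, G.rev_ini]
    · exact G.conn_ne_rev hp2 hp3
  | @fconn x y hx hy hxy ihx _ =>
    by_cases hyx : y = x
    · subst hyx
      rw [G.conn_self]
      obtain ⟨p, hp1, hp2, hp3⟩ := ihx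
      refine ⟨G.conn _ p, FaceMem.fconn hx hp1 hp2, ?_, ?_⟩
      · rw [G.conn_ini _ p hp2, G.rev_ini]
      · exact G.conn_ne_rev hp2 hp3
    · refine ⟨G.rev x, FaceMem.frev hx, ?_, ?_⟩
      · rw [G.conn_ini _ _ hxy, G.rev_ini]
      · intro h
        exact (G.conn_ne_rev hxy hyx) h.symm

/-- Rational label of an edge. -/
def labQ {k : ℕ} (lab : E → Fin k → ℤ) (e : E) : Fin k → ℚ := fun j => (lab e j : ℚ)

theorem faceMem_labQ_mem {k : ℕ} {lab : E → Fin k → ℤ} (hGKM : IsUnsignedGKM G lab)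
    {x : E} (hx : FaceMem G d₁ d₂ x) :
    labQ lab x ∈ Submodule.span ℚ {labQ lab d₁, labQ lab d₂} := by
  induction hx with
  | base₁ => exact Submodule.subset_span (by simp)
  | base₂ => exact Submodule.subset_span (by simp)
  | @frev x hx ih =>
    have : labQ lab (G.rev x) = -labQ lab x := by
      funext j
      simp only [labQ, hGKM.lab_rev x, Pi.neg_apply, Int.cast_neg]
    rw [this]
    exact neg_mem ih
  | @fconn x y hx hy hxy ihx ihy =>
    obtain ⟨s, m, _, hsm⟩ := hGKM.congru x y hxy
    have : labQ lab (G.conn x y) = (s : ℚ) • labQ lab y + (m : ℚ) • labQ lab x := by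
      funext j
      have := congrFun hsm j
      simp only [Pi.add_apply, Pi.smul_apply, smul_eq_mul] at this ⊢
      simp only [labQ, this]
      push_cast
      ring
    rw [this]
    exact add_mem (Submodule.smul_mem _ _ ihy) (Submodule.smul_mem _ _ ihx)

theorem span_pair_finrank {k : ℕ} (a b : Fin k → ℚ) :
    Module.finrank ℚ (Submodule.span ℚ {a, b}) ≤ 2 := by
  have h1 : ({a, b} : Set (Fin k → ℚ)) = Set.range ![a, b] := by
    ext x
    simp only [Matrix.range_cons, Matrix.range_empty, Set.union_empty, Set.union_singleton,
      Set.mem_insert_iff, Set.mem_singleton_iff]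
    tauto
  rw [h1]
  refine le_trans (finrank_span_le_card _) ?_
  have : (Set.range ![a, b]).toFinset.card ≤ 2 := by
    classical
    have : Set.range ![a, b] = {a, b} := by rw [h1]
    rw [Set.toFinset_range]
    exact le_trans (Finset.card_image_le) (by simp)
  simpa using this

/-- No three distinct edges of the face at a common vertex (GKM₃). -/
theorem faceMem_no_three {k : ℕ} {lab : E → Fin k → ℤ} (hGKM : IsUnsignedGKM G lab)
    (h3 : IsGKM3 G lab) {x₁ x₂ x₃ : E}
    (h1 : FaceMem G d₁ d₂ x₁) (h2 : FaceMem G d₁ d₂ x₂) (h3' : FaceMem G d₁ d₂ x₃)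
    (e21 : G.ini x₂ = G.ini x₁) (e31 : G.ini x₃ = G.ini x₁)
    (ne12 : x₁ ≠ x₂) (ne13 : x₁ ≠ x₃) (ne23 : x₂ ≠ x₃) : False := by
  have li := h3 x₁ x₂ x₃ e21 e31 ne12 ne13 ne23
  have hrank : Module.finrank ℚ
      (Submodule.span ℚ (Set.range ![labQ lab x₁, labQ lab x₂, labQ lab x₃])) = 3 := by
    have := finrank_span_eq_card li
    simp at this
    exact this
  have hsub : Submodule.span ℚ (Set.range ![labQ lab x₁, labQ lab x₂, labQ lab x₃])
      ≤ Submodule.span ℚ {labQ lab d₁, labQ lab d₂} := by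
    rw [Submodule.span_le]
    rintro z ⟨i, rfl⟩
    fin_cases i <;>
      simp only [Matrix.cons_val_zero, Matrix.cons_val_one, Matrix.head_cons,
        Matrix.cons_val_two, Matrix.tail_cons, Fin.isValue]
    · exact G.faceMem_labQ_mem hGKM h1
    · exact G.faceMem_labQ_mem hGKM h2
    · exact G.faceMem_labQ_mem hGKM h3'
  have hle := Submodule.finrank_mono hsub
  rw [hrank] at hle
  have := span_pair_finrank (labQ lab d₁) (labQ lab d₂)
  omega

end Face

end ConnGraph
namespace ConnGraph

variable {V E : Type*} (G : ConnGraph V E)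

section Face2

variable {k : ℕ} {lab : E → Fin k → ℤ} {d₁ d₂ : E}

theorem faceMem_star_eq (hGKM : IsUnsignedGKM G lab) (h3 : IsGKM3 G lab)
    {x p : E} (hx : FaceMem G d₁ d₂ x) (hp : FaceMem G d₁ d₂ p)
    (hpi : G.ini p = G.ini x) (hpx : p ≠ x) :
    {e' : E | FaceMem G d₁ d₂ e' ∧ G.ini e' = G.ini x} = {x, p} := by
  ext z
  simp only [Set.mem_setOf_eq, Set.mem_insert_iff, Set.mem_singleton_iff]
  constructor
  · rintro ⟨hz, hzi⟩
    by_contra hcon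
    push_neg at hcon
    exact G.faceMem_no_three hGKM h3 hx hp hz hpi hzi
      (fun h => hpx h.symm) (fun h => hcon.1 h.symm) (fun h => hcon.2 h.symm)
  · rintro (rfl | rfl)
    · exact ⟨hx, rfl⟩
    · exact ⟨hp, hpi⟩

theorem faceMem_path_from_base (hini : G.ini d₂ = G.ini d₁) {x : E}
    (hx : FaceMem G d₁ d₂ x) :
    ∃ l : List E, (∀ z ∈ l, FaceMem G d₁ d₂ z) ∧ G.IsPath (G.ini d₁) (G.ini x) l := by
  induction hx with
  | base₁ => exact ⟨[], by simp, rfl⟩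
  | base₂ => exact ⟨[], by simp, hini.symm⟩
  | @frev x hx ih =>
    obtain ⟨l, hl1, hl2⟩ := ih
    refine ⟨l ++ [x], ?_, ?_⟩
    · intro z hz
      rcases List.mem_append.1 hz with h | h
      · exact hl1 z h
      · simp at h; subst h; exact hx
    · rw [G.rev_ini]
      exact G.isPath_append hl2 ⟨rfl, rfl⟩
  | @fconn x y hx hy hxy ihx _ =>
    obtain ⟨l, hl1, hl2⟩ := ihx
    refine ⟨l ++ [x], ?_, ?_⟩
    · intro z hz
      rcases List.mem_append.1 hz with h | h
      · exact hl1 z h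
      · simp at h; subst h; exact hx
    · rw [G.conn_ini _ _ hxy]
      exact G.isPath_append hl2 ⟨rfl, rfl⟩

theorem face_isTwoFace (hGKM : IsUnsignedGKM G lab) (h3 : IsGKM3 G lab)
    (hini : G.ini d₂ = G.ini d₁) (hne : d₁ ≠ d₂) :
    G.IsTwoFace {e : E | FaceMem G d₁ d₂ e} := by
  refine ⟨⟨d₁, FaceMem.base₁⟩, fun e he => FaceMem.frev he, ?_, ?_, ?_⟩
  · intro e he
    obtain ⟨p, hp1, hp2, hp3⟩ := G.faceMem_partner he hne hini
    rw [show {e' : E | e' ∈ {e : E | FaceMem G d₁ d₂ e} ∧ G.ini e' = G.ini e}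
        = {e' : E | FaceMem G d₁ d₂ e' ∧ G.ini e' = G.ini e} from rfl,
      G.faceMem_star_eq hGKM h3 he hp1 hp2 hp3]
    exact Set.ncard_pair (fun h => hp3 h.symm)
  · intro e he e' he' h
    exact FaceMem.fconn he he' h
  · intro e he e' he'
    obtain ⟨l, hl1, hl2⟩ := G.faceMem_path_from_base hini he
    obtain ⟨l', hl1', hl2'⟩ := G.faceMem_path_from_base hini he'
    refine ⟨l.reverse.map G.rev ++ l', ?_, G.isPath_append (G.isPath_reverse hl2) hl2'⟩
    intro z hz
    rcases List.mem_append.1 hz with h | h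
    · simp only [List.mem_map, List.mem_reverse] at h
      obtain ⟨y, hy, rfl⟩ := h
      exact FaceMem.frev (hl1 y hy)
    · exact hl1' z h

variable [Fintype V] (o : E → ℤ)

/-- Every vertex of the face other than the top `w = ini d₁` lies strictly
below `w`. -/
theorem face_ascent (hGKM : IsUnsignedGKM G lab) (h3 : IsGKM3 G lab)
    (ho : ∀ e : E, o e = 1 ∨ o e = -1)
    (hacyclic : ¬ ∃ (v : V) (l : List E),
      l ≠ [] ∧ G.IsPath v v l ∧ ∀ e ∈ l, o e = 1)
    (hb4u : ∃! v : V,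
      {e : E | e ∈ {e : E | FaceMem G d₁ d₂ e} ∧ G.ini e = v ∧ o e = -1}.ncard = 2)
    (hini : G.ini d₂ = G.ini d₁) (hne : d₁ ≠ d₂)
    (hd₁ : o d₁ = -1) (hd₂ : o d₂ = -1) :
    ∀ u : V, (∃ z, FaceMem G d₁ d₂ z ∧ G.ini z = u) → u ≠ G.ini d₁ →
      G.hgt o u < G.hgt o (G.ini d₁) := by
  obtain ⟨u₀, hu₀, huniq⟩ := hb4u
  have hw : {e : E | e ∈ {e : E | FaceMem G d₁ d₂ e} ∧ G.ini e = G.ini d₁ ∧ o e = -1}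
      = {d₁, d₂} := by
    ext z
    simp only [Set.mem_setOf_eq, Set.mem_insert_iff, Set.mem_singleton_iff]
    constructor
    · rintro ⟨hz1, hz2, hz3⟩
      have := G.faceMem_star_eq hGKM h3 (FaceMem.base₁ (d₂ := d₂)) FaceMem.base₂ hini hne.symm
      have hz' : z ∈ ({d₁, d₂} : Set E) := this ▸ ⟨hz1, hz2⟩
      simpa using hz'
    · rintro (rfl | rfl)
      · exact ⟨FaceMem.base₁, rfl, hd₁⟩
      · exact ⟨FaceMem.base₂, hini, hd₂⟩
  have hwb : u₀ = G.ini d₁ := by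
    refine (huniq (G.ini d₁) ?_).symm
    show ({e : E | e ∈ {e : E | FaceMem G d₁ d₂ e} ∧ G.ini e = G.ini d₁ ∧ o e = -1}).ncard = 2
    rw [hw]
    exact Set.ncard_pair hne
  subst hwb
  -- strong induction on card V + 1 - hgt u
  suffices H : ∀ n : ℕ, ∀ u : V, Fintype.card V + 1 - G.hgt o u ≤ n →
      (∃ z, FaceMem G d₁ d₂ z ∧ G.ini z = u) → u = G.ini d₁ ∨
        G.hgt o u < G.hgt o (G.ini d₁) by
    intro u hu hune
    rcases H (Fintype.card V + 1) u (by omega) hu with h | h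
    · exact absurd h hune
    · exact h
  intro n
  induction n with
  | zero =>
    intro u hu _
    have := G.hgt_le_card o u
    omega
  | succ n ih =>
    intro u hcnt ⟨z, hz, hzi⟩
    by_cases hu : u = G.ini d₁
    · exact Or.inl hu
    obtain ⟨p, hp1, hp2, hp3⟩ := G.faceMem_partner hz hne hini
    have hstar := G.faceMem_star_eq hGKM h3 hz hp1 hp2 hp3
    -- not both down
    have hup : o z = 1 ∨ o p = 1 := by
      by_contra hcon
      push_neg at hcon
      have hzd : o z = -1 := (ho z).resolve_left hcon.1
      have hpd : o p = -1 := (ho p).resolve_left hcon.2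
      apply hu
      apply huniq
      show ({e : E | e ∈ {e : E | FaceMem G d₁ d₂ e} ∧ G.ini e = u ∧ o e = -1}).ncard = 2
      have : {e : E | e ∈ {e : E | FaceMem G d₁ d₂ e} ∧ G.ini e = u ∧ o e = -1}
          = {z, p} := by
        ext y
        simp only [Set.mem_setOf_eq, Set.mem_insert_iff, Set.mem_singleton_iff]
        constructor
        · rintro ⟨hy1, hy2, hy3⟩
          have hy' : y ∈ ({z, p} : Set E) := hstar ▸ ⟨hy1, by rw [hy2, hzi]⟩
          simpa using hy'
        · rintro (rfl | rfl)
          · exact ⟨hz, hzi, hzd⟩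
          · exact ⟨hp1, by rw [hp2, hzi], hpd⟩
      rw [this]
      exact Set.ncard_pair (fun h => hp3 h.symm)
    -- pick the up edge
    obtain ⟨y, hyF, hyi, hyo⟩ : ∃ y, FaceMem G d₁ d₂ y ∧ G.ini y = u ∧ o y = 1 := by
      rcases hup with h | h
      · exact ⟨z, hz, hzi, h⟩
      · exact ⟨p, hp1, by rw [hp2, hzi], h⟩
    have hlt : G.hgt o u < G.hgt o (G.ter y) := by
      have := G.hgt_lt_of_up o hacyclic hyo
      rwa [hyi] at this
    have hface' : ∃ z', FaceMem G d₁ d₂ z' ∧ G.ini z' = G.ter y :=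
      ⟨G.rev y, FaceMem.frev hyF, G.rev_ini y⟩
    have hle := G.hgt_le_card o (G.ter y)
    rcases ih (G.ter y) (by omega) hface' with h | h
    · right; rw [← h]; exact hlt
    · right; exact lt_trans hlt h
end Face2

end ConnGraph
namespace ConnGraph

variable {V E : Type*} (G : ConnGraph V E)

section Walk

variable {k : ℕ} {lab : E → Fin k → ℤ} {d₁ d₂ : E} [Fintype V] [Fintype E] (o : E → ℤ)

set_option maxHeartbeats 1000000 in
theorem face_boundary (hGKM : IsUnsignedGKM G lab) (h3 : IsGKM3 G lab)
    (ho : ∀ e : E, o e = 1 ∨ o e = -1)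
    (horev : ∀ e : E, o (G.rev e) = -o e)
    (hacyclic : ¬ ∃ (v : V) (l : List E),
      l ≠ [] ∧ G.IsPath v v l ∧ ∀ e ∈ l, o e = 1)
    (hb4u : ∃! v : V,
      {e : E | e ∈ {e : E | FaceMem G d₁ d₂ e} ∧ G.ini e = v ∧ o e = -1}.ncard = 2)
    (hini : G.ini d₂ = G.ini d₁) (hne : d₁ ≠ d₂)
    (hd₁ : o d₁ = -1) (hd₂ : o d₂ = -1) :
    ∃ Q : List E,
      G.IsFaceBoundary {e : E | FaceMem G d₁ d₂ e} (G.ini d₁) (d₁ :: (Q ++ [G.rev d₂])) ∧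
      Q.length ≤ Fintype.card E ∧
      ∀ z ∈ Q, max (G.hgt o (G.ini z)) (G.hgt o (G.ter z)) < G.hgt o (G.ini d₁) := by
  classical
  have hTF : G.IsTwoFace {e : E | FaceMem G d₁ d₂ e} := G.face_isTwoFace hGKM h3 hini hne
  -- the successor function of the walk
  let σ : E → E := fun x =>
    if h : FaceMem G d₁ d₂ x then
      (G.faceMem_partner (FaceMem.frev h) hne hini).choose
    else x
  have hσ : ∀ {x : E}, FaceMem G d₁ d₂ x →
      FaceMem G d₁ d₂ (σ x) ∧ G.ini (σ x) = G.ter x ∧ σ x ≠ G.rev x := by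
    intro x hx
    have hspec := (G.faceMem_partner (FaceMem.frev hx) hne hini).choose_spec
    have hσx : σ x = (G.faceMem_partner (FaceMem.frev hx) hne hini).choose := dif_pos hx
    rw [hσx]
    exact ⟨hspec.1, by rw [hspec.2.1, G.rev_ini], hspec.2.2⟩
  have hσF : ∀ {x : E}, FaceMem G d₁ d₂ x → FaceMem G d₁ d₂ (σ x) := fun hx => (hσ hx).1
  have hσi : ∀ {x : E}, FaceMem G d₁ d₂ x → G.ini (σ x) = G.ter x := fun hx => (hσ hx).2.1
  have hσne : ∀ {x : E}, FaceMem G d₁ d₂ x → σ x ≠ G.rev x := fun hx => (hσ hx).2.2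
  -- uniqueness of the successor
  have huniq : ∀ {x y : E}, FaceMem G d₁ d₂ x → FaceMem G d₁ d₂ y →
      G.ini y = G.ter x → y ≠ G.rev x → y = σ x := by
    intro x y hx hy hyi hyne
    have hstar := G.faceMem_star_eq hGKM h3 (FaceMem.frev hx) (hσF hx)
      (by rw [hσi hx, G.rev_ini]) (hσne hx)
    have hy' : y ∈ ({G.rev x, σ x} : Set E) := by
      rw [← hstar]
      exact ⟨hy, by rw [G.rev_ini, hyi]⟩
    rcases hy' with h | h
    · exact absurd h hyne
    · exact h
  -- σ ∘ rev ∘ σ = rev on the face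
  have hσrσ : ∀ {x : E}, FaceMem G d₁ d₂ x → σ (G.rev (σ x)) = G.rev x := by
    intro x hx
    refine (huniq (FaceMem.frev (hσF hx)) (FaceMem.frev hx) ?_ ?_).symm
    · rw [G.rev_ini, G.rev_ter, hσi hx]
    · rw [G.rev_rev]
      intro h
      exact (hσne hx) h.symm
  -- injectivity of σ on the face
  have hσinj : ∀ {x y : E}, FaceMem G d₁ d₂ x → FaceMem G d₁ d₂ y → σ x = σ y → x = y := by
    intro x y hx hy h
    have h1 := hσrσ hx
    rw [h, hσrσ hy] at h1
    have h2 := congrArg G.rev h1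
    rw [G.rev_rev, G.rev_rev] at h2
    exact h2.symm
  -- the walk
  let seq : ℕ → E := fun j => σ^[j] d₁
  have hseq0 : seq 0 = d₁ := rfl
  have hseqsucc : ∀ j, seq (j + 1) = σ (seq j) := by
    intro j
    simp only [seq, Function.iterate_succ_apply']
  have hseqF : ∀ j, FaceMem G d₁ d₂ (seq j) := by
    intro j
    induction j with
    | zero => exact FaceMem.base₁
    | succ j ih => rw [hseqsucc]; exact hσF ih
  have hterini : ∀ j, G.ter (seq j) = G.ini (seq (j + 1)) := by
    intro j
    rw [hseqsucc, hσi (hseqF j)]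
  have hiterinj : ∀ (i : ℕ) (a b : E), FaceMem G d₁ d₂ a → FaceMem G d₁ d₂ b →
      σ^[i] a = σ^[i] b → a = b := by
    intro i
    induction i with
    | zero => intro a b _ _ h; simpa using h
    | succ i ih =>
      intro a b ha hb h
      rw [Function.iterate_succ_apply, Function.iterate_succ_apply] at h
      exact hσinj ha hb (ih _ _ (hσF ha) (hσF hb) h)
  have hcancel : ∀ i j, i ≤ j → seq i = seq j → seq (j - i) = d₁ := by
    intro i j hij h
    have h1 : seq j = σ^[i] (seq (j - i)) := by
      simp only [seq, ← Function.iterate_add_apply]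
      congr 1
      omega
    have h2 : seq i = σ^[i] (seq 0) := by
      simp only [seq, ← Function.iterate_add_apply]
      congr 1
    rw [h1, h2] at h
    rw [← hseq0]
    exact (hiterinj i _ _ (hseqF 0) (hseqF (j - i)) h).symm
  -- existence of a period
  have hper : ∃ p : ℕ, 0 < p ∧ seq p = d₁ := by
    obtain ⟨i, j, hij, hmap⟩ := Finite.exists_ne_map_eq_of_infinite seq
    rcases lt_or_gt_of_ne hij with h | h
    · exact ⟨j - i, by omega, hcancel i j (le_of_lt h) hmap⟩
    · exact ⟨i - j, by omega, hcancel j i (le_of_lt h) hmap.symm⟩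
  set m := Nat.find hper with hm_def
  obtain ⟨hm0, hmper⟩ : 0 < m ∧ seq m = d₁ := Nat.find_spec hper
  have hmmin : ∀ j, 0 < j → j < m → seq j ≠ d₁ := by
    intro j hj0 hjm hj
    exact Nat.find_min hper hjm ⟨hj0, hj⟩
  -- distinctness before the period
  have hseq_ne : ∀ i j, i < j → j < m → seq i ≠ seq j := by
    intro i j hij hjm h
    exact hmmin (j - i) (by omega) (by omega) (hcancel i j (le_of_lt hij) h)
  -- periodicity
  have hper_add : ∀ a, seq (a + m) = seq a := by
    intro a
    have : seq (a + m) = σ^[a] (seq m) := by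
      simp only [seq, ← Function.iterate_add_apply]
    rw [this, hmper]
  have hmod : ∀ j, seq j = seq (j % m) := by
    intro j
    induction j using Nat.strong_induction_on with
    | _ j ih =>
      by_cases hj : j < m
      · rw [Nat.mod_eq_of_lt hj]
      · push_neg at hj
        have h1 : seq j = seq (j - m) := by
          conv_lhs => rw [show j = (j - m) + m by omega]
          exact hper_add (j - m)
        rw [h1, ih (j - m) (by omega), ← Nat.mod_eq_sub_mod hj]
  -- m ≥ 2
  have hm2 : 2 ≤ m := by
    by_contra hcon
    have hm1 : m = 1 := by omega
    have : G.ini (seq 1) = G.ter (seq 0) := hσi (hseqF 0)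
    rw [hm1] at hmper
    rw [hmper, hseq0] at this
    exact (G.ini_ne_ter o hacyclic horev ho d₁) this
  -- no edge and its reverse both occur
  have hrevne : ∀ x : E, x ≠ G.rev x := fun x h => (G.rev_ne hGKM x) h.symm
  have hnorev : ∀ i j, i < m → j < m → seq i ≠ G.rev (seq j) := by
    intro i j him hjm heq
    have hP : ∀ t, t ≤ m → seq (i + t) = G.rev (seq (j + (m - t))) := by
      intro t
      induction t with
      | zero =>
        intro _
        simpa [hper_add] using heq
      | succ t iht =>
        intro htm
        have ht : t ≤ m := by omega
        have hidx : j + (m - t) = (j + (m - (t + 1))) + 1 := by omega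
        have h1 : seq (i + (t + 1)) = σ (seq (i + t)) := by
          rw [show i + (t + 1) = (i + t) + 1 by omega, hseqsucc]
        rw [h1, iht ht, hidx, hseqsucc]
        exact hσrσ (hseqF (j + (m - (t + 1))))
    rcases Nat.even_or_odd (j + m - i) with he | hodd
    · obtain ⟨t, ht⟩ := he
      have htm : t ≤ m := by omega
      have hit : i + t = j + (m - t) := by omega
      have := hP t htm
      rw [← hit] at this
      exact hrevne (seq (i + t)) this
    · obtain ⟨t, ht⟩ := hodd
      have ht1 : t + 1 ≤ m := by omega
      have hit : i + (t + 1) = (j + (m - (t + 1))) + 1 := by omega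
      have hPt := hP (t + 1) ht1
      rw [hit, hseqsucc] at hPt
      exact hσne (hseqF (j + (m - (t + 1)))) hPt
  -- the boundary cycle
  set f : List E := (List.range m).map seq with hf_def
  have hmemf : ∀ z, z ∈ f ↔ ∃ j, j < m ∧ seq j = z := by
    intro z
    simp only [f, List.mem_map, List.mem_range]
  have hfpath : ∀ n : ℕ, G.IsPath (G.ini d₁) (G.ini (seq n)) ((List.range n).map seq) := by
    intro n
    induction n with
    | zero => exact rfl
    | succ n ihn =>
      rw [List.range_succ, List.map_append]
      exact G.isPath_append ihn ⟨rfl, hterini n⟩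
  have hfnodup : f.Nodup := by
    refine List.Nodup.map_on ?_ List.nodup_range
    intro i hi j hj hijeq
    simp only [List.mem_range] at hi hj
    by_contra hcon
    rcases lt_or_gt_of_ne hcon with h | h
    · exact hseq_ne i j h hj hijeq
    · exact hseq_ne j i h hi hijeq.symm
  -- the star at the top vertex
  have hstar_top : {e' : E | FaceMem G d₁ d₂ e' ∧ G.ini e' = G.ini d₁} = {d₁, d₂} :=
    G.faceMem_star_eq hGKM h3 FaceMem.base₁ FaceMem.base₂ hini (fun h => hne h.symm)
  -- identify the last edge
  have hlast : seq (m - 1) = G.rev d₂ := by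
    have h1 : G.rev (seq (m - 1)) ∈ ({d₁, d₂} : Set E) := by
      rw [← hstar_top]
      refine ⟨FaceMem.frev (hseqF (m - 1)), ?_⟩
      rw [G.rev_ini, hterini (m - 1), show m - 1 + 1 = m by omega, hmper]
    rcases h1 with h | h
    · exfalso
      apply hnorev (m - 1) 0 (by omega) (by omega)
      rw [hseq0, ← h, G.rev_rev]
    · rw [← h, G.rev_rev]
  -- every face vertex is visited
  have hvisit : ∀ e : E, FaceMem G d₁ d₂ e → (∃ j, G.ini e = G.ini (seq j)) →
      e ∈ f ∨ G.rev e ∈ f := by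
    intro e he hj'
    obtain ⟨j, hj⟩ := hj'
    have hprev : G.ter (seq (j + m - 1)) = G.ini (seq j) := by
      rw [hterini (j + m - 1), show j + m - 1 + 1 = j + m by omega, hper_add]
    have hσprev : σ (seq (j + m - 1)) = seq j := by
      rw [← hseqsucc (j + m - 1), show j + m - 1 + 1 = j + m by omega, hper_add]
    have hne' : seq j ≠ G.rev (seq (j + m - 1)) := by
      rw [← hσprev]; exact hσne (hseqF _)
    have hstar := G.faceMem_star_eq hGKM h3 (hseqF j) (FaceMem.frev (hseqF (j + m - 1)))
      (by rw [G.rev_ini, hprev]) (fun h => hne' h.symm)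
    have he' : e ∈ ({seq j, G.rev (seq (j + m - 1))} : Set E) := by
      rw [← hstar]; exact ⟨he, hj⟩
    rcases he' with h | h
    · left
      rw [hmemf]
      exact ⟨j % m, Nat.mod_lt _ hm0, by rw [← hmod j]; exact h.symm⟩
    · right
      rw [hmemf]
      refine ⟨(j + m - 1) % m, Nat.mod_lt _ hm0, ?_⟩
      rw [← hmod (j + m - 1)]
      rw [h, G.rev_rev]
  -- reachability: every face vertex is on the walk
  have hreach : ∀ (l : List E) (b a : V), (∀ z ∈ l, FaceMem G d₁ d₂ z) →
      G.IsPath b a l → (∃ j, b = G.ini (seq j)) → ∃ j, a = G.ini (seq j) := by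
    intro l
    induction l with
    | nil => intro b a _ hp hb; cases hp; exact hb
    | cons z l ih =>
      intro b a hmem hp hb
      obtain ⟨j, hj⟩ := hb
      refine ih (G.ter z) a (fun y hy => hmem y (List.mem_cons_of_mem _ hy)) hp.2 ?_
      have hz : FaceMem G d₁ d₂ z := hmem z List.mem_cons_self
      have hzi : G.ini z = G.ini (seq j) := by rw [hp.1, hj]
      rcases hvisit z hz ⟨j, hzi⟩ with h | h
      · rw [hmemf] at h
        obtain ⟨t, htm, ht⟩ := h
        exact ⟨t + 1, by rw [← hterini t, ht]⟩
      · rw [hmemf] at h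
        obtain ⟨t, htm, ht⟩ := h
        refine ⟨t, ?_⟩
        rw [ht, G.rev_ini]
  have hcover : ∀ e ∈ {e : E | FaceMem G d₁ d₂ e}, e ∈ f ∨ G.rev e ∈ f := by
    intro e he
    obtain ⟨l, hl1, hl2⟩ := G.faceMem_path_from_base hini he
    exact hvisit e he (hreach l (G.ini d₁) (G.ini e) hl1 hl2 ⟨0, by rw [hseq0]⟩)
  -- no edge together with its reverse
  have hfnr : ∀ e ∈ f, G.rev e ∉ f := by
    intro e hef hrf
    rw [hmemf] at hef hrf
    obtain ⟨i, him, hi⟩ := hef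
    obtain ⟨j, hjm, hj⟩ := hrf
    exact hnorev j i hjm him (by rw [hi]; exact hj)
  -- interior vertices differ from the top
  have hint : ∀ t, 0 < t → t < m → G.ini (seq t) ≠ G.ini d₁ := by
    intro t ht0 htm h
    have hmem : seq t ∈ ({d₁, d₂} : Set E) := by rw [← hstar_top]; exact ⟨hseqF t, h⟩
    rcases hmem with h1 | h1
    · exact hseq_ne 0 t ht0 htm (by rw [hseq0, h1])
    · exact hnorev t (m - 1) htm (by omega) (by rw [h1, hlast, G.rev_rev])
  -- decompose f
  set Q : List E := (List.range (m - 2)).map (fun t => seq (t + 1)) with hQ_def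
  have hfQ : f = d₁ :: (Q ++ [G.rev d₂]) := by
    have h1 : List.range m = (0 :: (List.range (m - 2)).map Nat.succ) ++ [m - 1] := by
      conv_lhs => rw [show m = (m - 2 + 1) + 1 by omega]
      rw [List.range_succ, List.range_succ_eq_map]
      rw [show m - 2 + 1 = m - 1 by omega]
    rw [hf_def, h1]
    simp only [List.map_append, List.map_cons, List.map_map, List.map_nil]
    rw [show seq 0 = d₁ from hseq0, hlast, hQ_def]
    have hfun : (seq ∘ Nat.succ) = (fun t => seq (t + 1)) := rfl
    rw [hfun]
    simp
  -- lengths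
  have hflen : f.length = m := by rw [hf_def, List.length_map, List.length_range]
  have hfcard : m ≤ Fintype.card E := by
    have := List.Nodup.length_le_card hfnodup
    rwa [hflen] at this
  have hQlen : Q.length = m - 2 := by rw [hQ_def, List.length_map, List.length_range]
  -- heights of interior edges
  have hQhgt : ∀ z ∈ Q, max (G.hgt o (G.ini z)) (G.hgt o (G.ter z)) < G.hgt o (G.ini d₁) := by
    intro z hz
    rw [hQ_def, List.mem_map] at hz
    obtain ⟨t, ht, rfl⟩ := hz
    rw [List.mem_range] at ht
    have hasc := G.face_ascent o hGKM h3 ho hacyclic hb4u hini hne hd₁ hd₂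
    have h1 : G.hgt o (G.ini (seq (t + 1))) < G.hgt o (G.ini d₁) :=
      hasc _ ⟨seq (t + 1), hseqF _, rfl⟩ (hint (t + 1) (by omega) (by omega))
    have h2 : G.hgt o (G.ter (seq (t + 1))) < G.hgt o (G.ini d₁) := by
      rw [hterini (t + 1)]
      exact hasc _ ⟨seq (t + 2), hseqF _, rfl⟩ (hint (t + 2) (by omega) (by omega))
    exact max_lt h1 h2
  -- path
  have hfP : G.IsPath (G.ini d₁) (G.ini d₁) f := by
    have := hfpath m
    rwa [hmper] at this
  have hfne : f ≠ [] := by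
    rw [hf_def]
    simp only [ne_eq, List.map_eq_nil_iff, List.range_eq_nil]
    omega
  have hfmem : ∀ e ∈ f, e ∈ {e : E | FaceMem G d₁ d₂ e} := by
    intro e he
    rw [hmemf] at he
    obtain ⟨j, _, rfl⟩ := he
    exact hseqF j
  refine ⟨Q, ?_, by omega, hQhgt⟩
  rw [← hfQ]
  exact ⟨hTF, hfne, hfP, hfmem, hfnodup, hfnr, hcover⟩

end Walk
end ConnGraph
namespace ConnGraph

variable {V E : Type*} (G : ConnGraph V E)

section Measure

variable (o : E → ℤ) [Fintype V] [Fintype E]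

/-- Weight of an edge: `B ^ (max of heights of its endpoints)`. -/
noncomputable def ewt (z : E) : ℕ :=
  (Fintype.card E + 1) ^ (max (G.hgt o (G.ini z)) (G.hgt o (G.ter z)))

/-- The measure of an edge path. -/
noncomputable def mu (l : List E) : ℕ := (l.map (G.ewt o)).sum

theorem mu_nil : G.mu o [] = 0 := rfl

theorem mu_append (p q : List E) : G.mu o (p ++ q) = G.mu o p + G.mu o q := by
  simp [mu]

theorem mu_cons (z : E) (p : List E) : G.mu o (z :: p) = G.ewt o z + G.mu o p := by
  simp [mu]

theorem ewt_pos (z : E) : 0 < G.ewt o z := Nat.pow_pos (by omega)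

theorem ewt_rev (z : E) : G.ewt o (G.rev z) = G.ewt o z := by
  simp only [ewt, G.rev_ini, G.rev_ter]
  rw [Nat.max_comm]

theorem mu_revmap (p : List E) : G.mu o (p.reverse.map G.rev) = G.mu o p := by
  induction p with
  | nil => rfl
  | cons z p ih =>
    have h1 : (z :: p).reverse.map G.rev = p.reverse.map G.rev ++ [G.rev z] := by simp
    rw [h1, mu_append, ih, mu_cons, mu_cons, ewt_rev]
    simp [mu_nil]
    omega

theorem ewt_ge_ini (z : E) :
    (Fintype.card E + 1) ^ (G.hgt o (G.ini z)) ≤ G.ewt o z :=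
  Nat.pow_le_pow_right (by omega) (le_max_left _ _)

theorem ewt_ge_ter (z : E) :
    (Fintype.card E + 1) ^ (G.hgt o (G.ter z)) ≤ G.ewt o z :=
  Nat.pow_le_pow_right (by omega) (le_max_right _ _)

theorem mu_bound (H : ℕ) (Q : List E)
    (hQ : ∀ z ∈ Q, max (G.hgt o (G.ini z)) (G.hgt o (G.ter z)) < H)
    (hlen : Q.length ≤ Fintype.card E) :
    G.mu o Q < (Fintype.card E + 1) ^ H := by
  rcases Q with _ | ⟨z₀, Q'⟩
  · rw [mu_nil]
    exact Nat.pow_pos (by omega)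
  · set Q := z₀ :: Q'
    have hH : 1 ≤ H := by
      have := hQ z₀ (by simp [Q])
      omega
    have hle : ∀ x ∈ Q.map (G.ewt o), x ≤ (Fintype.card E + 1) ^ (H - 1) := by
      intro x hx
      rw [List.mem_map] at hx
      obtain ⟨z, hz, rfl⟩ := hx
      exact Nat.pow_le_pow_right (by omega) (by have := hQ z hz; omega)
    have hsum := List.sum_le_card_nsmul (Q.map (G.ewt o)) _ hle
    rw [List.length_map] at hsum
    have h2 : Q.length • (Fintype.card E + 1) ^ (H - 1)
        ≤ Fintype.card E * (Fintype.card E + 1) ^ (H - 1) := by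
      rw [smul_eq_mul]
      exact Nat.mul_le_mul_right _ hlen
    have h3 : Fintype.card E * (Fintype.card E + 1) ^ (H - 1)
        < (Fintype.card E + 1) ^ H := by
      have h4 : (Fintype.card E + 1) ^ H = (Fintype.card E + 1) * (Fintype.card E + 1) ^ (H - 1) := by
        rw [← pow_succ']
        congr 1
        omega
      rw [h4]
      have : 0 < (Fintype.card E + 1) ^ (H - 1) := Nat.pow_pos (show 0 < Fintype.card E + 1 by omega)
      exact Nat.mul_lt_mul_of_lt_of_le (by omega) (le_refl _) this
    calc G.mu o Q ≤ Q.length • (Fintype.card E + 1) ^ (H - 1) := hsum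
      _ ≤ _ := h2
      _ < _ := h3

theorem exists_updown (ho : ∀ e : E, o e = 1 ∨ o e = -1) (l : List E) :
    (∃ (A : List E) (x y : E) (B' : List E),
        l = A ++ x :: y :: B' ∧ o x = 1 ∧ o y = -1) ∨
    (∃ D U : List E, l = D ++ U ∧ (∀ e ∈ D, o e = -1) ∧ (∀ e ∈ U, o e = 1)) := by
  induction l with
  | nil => exact Or.inr ⟨[], [], rfl, by simp, by simp⟩
  | cons e l ih =>
    rcases ih with ⟨A, x, y, B', rfl, hx, hy⟩ | ⟨D, U, rfl, hD, hU⟩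
    · exact Or.inl ⟨e :: A, x, y, B', rfl, hx, hy⟩
    · rcases ho e with he | he
      · rcases D with _ | ⟨d, D'⟩
        · exact Or.inr ⟨[], e :: U, rfl, by simp, by
            intro z hz
            rcases List.mem_cons.1 hz with rfl | hz
            · exact he
            · exact hU z hz⟩
        · exact Or.inl ⟨[], e, d, D' ++ U, by simp, he, hD d (by simp)⟩
      · refine Or.inr ⟨e :: D, U, rfl, ?_, hU⟩
        intro z hz
        rcases List.mem_cons.1 hz with rfl | hz
        · exact he
        · exact hD z hz

end Measure

section Conj

theorem conjFaceLoop_cons (a : E) {m' : List E}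
    (hm : G.ConjFaceLoop (G.ter a) m') :
    G.ConjFaceLoop (G.ini a) (a :: (m' ++ [G.rev a])) := by
  obtain ⟨w', g, f, F, hg, hf, rfl⟩ := hm
  refine ⟨w', a :: g, f, F, ⟨rfl, hg⟩, hf, ?_⟩
  simp

theorem conj_flatten (a : E) (ms : List (List E)) :
    G.Homotopic ([a] ++ ms.flatten ++ [G.rev a])
      ((ms.map (fun m' => a :: (m' ++ [G.rev a]))).flatten) := by
  induction ms with
  | nil =>
    have h1 : [a] ++ ([] : List (List E)).flatten ++ [G.rev a]
        = [] ++ a :: G.rev a :: [] := by simp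
    have h2 : ((([] : List (List E))).map (fun m' => a :: (m' ++ [G.rev a]))).flatten
        = [] ++ [] := by simp
    rw [h1, h2]
    exact G.homotopic_step [] [] a
  | cons m ms ih =>
    have hstep : G.Homotopic ((a :: (m ++ [G.rev a])) ++ ([a] ++ ms.flatten ++ [G.rev a]))
        ([a] ++ (m :: ms).flatten ++ [G.rev a]) := by
      have h1 : (a :: (m ++ [G.rev a])) ++ ([a] ++ ms.flatten ++ [G.rev a])
          = (a :: m) ++ (G.rev a) :: (G.rev (G.rev a)) :: (ms.flatten ++ [G.rev a]) := by
        simp [G.rev_rev]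
      have h2 : [a] ++ (m :: ms).flatten ++ [G.rev a]
          = (a :: m) ++ (ms.flatten ++ [G.rev a]) := by simp
      rw [h1, h2]
      exact G.homotopic_step _ _ _
    refine (hstep.symm' G).trans' G ?_
    have h3 : ((m :: ms).map (fun m' => a :: (m' ++ [G.rev a]))).flatten
        = (a :: (m ++ [G.rev a])) ++ ((ms.map (fun m' => a :: (m' ++ [G.rev a]))).flatten) := by
      simp
    rw [h3]
    have := ih.append_congr G (a :: (m ++ [G.rev a])) []
    simpa using this

end Conj

end ConnGraph
namespace ConnGraph

variable {V E : Type*} (G : ConnGraph V E)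

section Main

variable {k : ℕ} {lab : E → Fin k → ℤ} [Fintype V] [Fintype E] (o : E → ℤ)

set_option maxHeartbeats 2000000 in
theorem main_aux (hGKM : IsUnsignedGKM G lab) (h3 : IsGKM3 G lab)
    (ho : ∀ e : E, o e = 1 ∨ o e = -1)
    (horev : ∀ e : E, o (G.rev e) = -o e)
    (hacyclic : ¬ ∃ (v : V) (l : List E),
      l ≠ [] ∧ G.IsPath v v l ∧ ∀ e ∈ l, o e = 1)
    (hb4 : ∀ F : Set E, G.IsTwoFace F →
      ∃! v : V, {e : E | e ∈ F ∧ G.ini e = v ∧ o e = -1}.ncard = 2) :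
    ∀ (n : ℕ) (v : V) (l : List E), G.mu o l < n → G.IsPath v v l →
      ∃ ls : List (List E), (∀ m' ∈ ls, G.ConjFaceLoop v m') ∧
        G.Homotopic l ls.flatten := by
  intro n
  induction n with
  | zero => intro v l hmu _; exact absurd hmu (Nat.not_lt_zero _)
  | succ n ih =>
    intro v l hmu hp
    rcases eq_or_ne l [] with rfl | hlne
    · exact ⟨[], by simp, by simpa using Homotopic.refl G []⟩
    rcases exists_updown o ho l with ⟨A, x, y, B', rfl, hx, hy⟩ | ⟨D, U, rfl, hD, hU⟩
    · -- an ascent followed by a descent exists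
      rw [G.isPath_append_iff] at hp
      obtain ⟨u, hA, hrest⟩ := hp
      have hxi : G.ini x = u := hrest.1
      have hyi : G.ini y = G.ter x := hrest.2.1
      have hB' : G.IsPath (G.ter y) v B' := hrest.2.2
      by_cases hyx : y = G.rev x
      · -- a backtrack: delete it
        subst hyx
        have hpath2 : G.IsPath v v (A ++ B') := by
          refine G.isPath_append hA ?_
          have h1 : G.ter (G.rev x) = u := by rw [G.rev_ter, hxi]
          rwa [h1] at hB'
        have hmu2 : G.mu o (A ++ B') < n := by
          have e1 : G.mu o (A ++ x :: G.rev x :: B')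
              = G.mu o A + (G.ewt o x + (G.ewt o (G.rev x) + G.mu o B')) := by
            rw [G.mu_append, G.mu_cons, G.mu_cons]
          have e2 : G.mu o (A ++ B') = G.mu o A + G.mu o B' := G.mu_append o A B'
          have p1 := G.ewt_pos o x
          have p2 := G.ewt_pos o (G.rev x)
          omega
        obtain ⟨ls, hls, hhom⟩ := ih v (A ++ B') hmu2 hpath2
        exact ⟨ls, hls, (G.homotopic_step A B' x).trans' G hhom⟩
      · -- interior local maximum: slide across a 2-face
        have hini_f : G.ini (G.rev x) = G.ini y := by rw [G.rev_ini]; exact hyi.symm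
        have hd2 : o (G.rev x) = -1 := by rw [horev, hx]
        have hb4u := hb4 _ (G.face_isTwoFace hGKM h3 hini_f hyx)
        obtain ⟨Q', hFB, hQlen, hQhgt⟩ := G.face_boundary o hGKM h3 ho horev hacyclic
          hb4u hini_f hyx hy hd2
        rw [G.rev_rev] at hFB
        -- path structure of the boundary
        have hfpath : G.IsPath (G.ini y) (G.ini y) (y :: (Q' ++ [x])) := hFB.2.2.1
        have hfQ : G.IsPath (G.ter y) (G.ini y) (Q' ++ [x]) := hfpath.2
        rw [G.isPath_append_iff] at hfQ
        obtain ⟨z₁, hQ'p, hxp⟩ := hfQ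
        have hz₁ : z₁ = u := by rw [← hxp.1, hxi]
        subst hz₁
        -- the conjugated face loop
        set C : List E := (A ++ [x]) ++ (y :: (Q' ++ [x])) ++ ((A ++ [x]).reverse.map G.rev)
          with hC_def
        have hCloop : G.ConjFaceLoop v C := by
          refine ⟨G.ini y, A ++ [x], y :: (Q' ++ [x]), _, ?_, hFB, rfl⟩
          exact G.isPath_append hA ⟨hxi, hyi.symm⟩
        -- the new loop
        set l₂ : List E := A ++ (Q'.reverse.map G.rev) ++ B' with hl₂_def
        have hpath₂ : G.IsPath v v l₂ := by
          refine G.isPath_append (G.isPath_append hA ?_) hB'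
          exact G.isPath_reverse hQ'p
        have hmu₂ : G.mu o l₂ < n := by
          have e1 : G.mu o (A ++ x :: y :: B')
              = G.mu o A + (G.ewt o x + (G.ewt o y + G.mu o B')) := by
            rw [G.mu_append, G.mu_cons, G.mu_cons]
          have e2 : G.mu o l₂ = G.mu o A + G.mu o Q' + G.mu o B' := by
            rw [hl₂_def, G.mu_append, G.mu_append, G.mu_revmap]
          have hQb : G.mu o Q' < (Fintype.card E + 1) ^ (G.hgt o (G.ini y)) :=
            G.mu_bound o _ Q' hQhgt hQlen
          have hwx : (Fintype.card E + 1) ^ (G.hgt o (G.ini y)) ≤ G.ewt o x := by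
            have := G.ewt_ge_ter o x
            rwa [← hyi] at this
          have p2 := G.ewt_pos o y
          omega
        obtain ⟨ls₂, hls₂, hhom₂⟩ := ih v l₂ hmu₂ hpath₂
        refine ⟨C :: ls₂, ?_, ?_⟩
        · intro m' hm'
          rcases List.mem_cons.1 hm' with rfl | hm'
          · exact hCloop
          · exact hls₂ m' hm'
        · -- l ~ C ++ l₂ ~ C ++ flatten ls₂
          have hred : G.Homotopic (C ++ l₂) (A ++ x :: y :: B') := by
            have eq1 : C ++ l₂ = (A ++ [x] ++ y :: Q') ++ x :: G.rev x ::
                (A.reverse.map G.rev ++ (A ++ ((Q'.reverse.map G.rev) ++ B'))) := by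
              simp [hC_def, hl₂_def]
            have h1 := G.homotopic_step (A ++ [x] ++ y :: Q')
              (A.reverse.map G.rev ++ (A ++ ((Q'.reverse.map G.rev) ++ B'))) x
            rw [← eq1] at h1
            refine h1.trans' G ?_
            have eq2 : (A ++ [x] ++ y :: Q') ++
                (A.reverse.map G.rev ++ (A ++ ((Q'.reverse.map G.rev) ++ B')))
                = (A ++ [x] ++ y :: Q') ++ A.reverse.map G.rev ++ A ++
                  ((Q'.reverse.map G.rev) ++ B') := by
              simp
            rw [eq2]
            refine (G.homotopic_cancel_left (A ++ [x] ++ y :: Q')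
              ((Q'.reverse.map G.rev) ++ B') A).trans' G ?_
            have eq3 : (A ++ [x] ++ y :: Q') ++ ((Q'.reverse.map G.rev) ++ B')
                = (A ++ [x] ++ [y]) ++ Q' ++ (Q'.reverse.map G.rev) ++ B' := by
              simp
            rw [eq3]
            refine (G.homotopic_cancel_right (A ++ [x] ++ [y]) B' Q').trans' G ?_
            have eq4 : (A ++ [x] ++ [y]) ++ B' = A ++ x :: y :: B' := by simp
            rw [eq4]
            exact Homotopic.refl G _
          refine (hred.symm' G).trans' G ?_
          have h2 := hhom₂.append_congr G C []
          simpa using h2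
    · -- no ascent-descent pair: the loop descends then ascends
      rcases D with _ | ⟨e₁, D'⟩
      · -- all edges ascend: contradiction with acyclicity
        exfalso
        refine hacyclic ⟨v, [] ++ U, hlne, hp, ?_⟩
        intro e he
        exact hU e (by simpa using he)
      rcases U.eq_nil_or_concat with rfl | ⟨U', e_q, rfl⟩
      · -- all edges descend: contradiction
        exfalso
        refine G.no_all_down_loop o hacyclic horev (v := v) (l := (e₁ :: D') ++ []) hlne hp ?_
        intro e he
        exact hD e (by simpa using he)
      have he₁ : o e₁ = -1 := hD e₁ (by simp)
      have heq : o e_q = 1 := hU e_q (by simp)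
      set M : List E := D' ++ U' with hM_def
      have hleq : (e₁ :: D') ++ (U'.concat e_q) = e₁ :: (M ++ [e_q]) := by
        simp [hM_def]
      rw [hleq] at hp hmu ⊢
      have hiv : G.ini e₁ = v := hp.1
      have hrest : G.IsPath (G.ter e₁) v (M ++ [e_q]) := hp.2
      rw [G.isPath_append_iff] at hrest
      obtain ⟨z', hM', hq⟩ := hrest
      have hqi : G.ini e_q = z' := hq.1
      have hqt : G.ter e_q = v := hq.2
      have hmu_split : G.mu o (e₁ :: (M ++ [e_q]))
          = G.ewt o e₁ + (G.mu o M + G.ewt o e_q) := by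
        rw [G.mu_cons, G.mu_append, G.mu_cons, G.mu_nil]
        omega
      by_cases hcase : e₁ = G.rev e_q
      · -- the loop starts and ends with reversed edges: conjugate
        have heq1 : e_q = G.rev e₁ := by rw [hcase, G.rev_rev]
        have hz'e : z' = G.ter e₁ := by
          rw [← hqi, heq1, G.rev_ini]
        subst hz'e
        have hmuM : G.mu o M < n := by
          have p1 := G.ewt_pos o e₁
          have p2 := G.ewt_pos o e_q
          omega
        obtain ⟨ms, hms, hhomM⟩ := ih (G.ter e₁) M hmuM hM'
        refine ⟨ms.map (fun m' => e₁ :: (m' ++ [G.rev e₁])), ?_, ?_⟩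
        · intro m'' hm''
          rw [List.mem_map] at hm''
          obtain ⟨m', hm', rfl⟩ := hm''
          have := G.conjFaceLoop_cons e₁ (hms m' hm')
          rwa [hiv] at this
        · have step1 : G.Homotopic (e₁ :: (M ++ [e_q]))
              ([e₁] ++ ms.flatten ++ [G.rev e₁]) := by
            have h1 := hhomM.append_congr G [e₁] [G.rev e₁]
            have eql : e₁ :: (M ++ [e_q]) = [e₁] ++ M ++ [G.rev e₁] := by
              rw [heq1]; simp
            rw [eql]
            exact h1
          exact step1.trans' G (G.conj_flatten e₁ ms)
      · -- wrap-around local maximum at the base vertex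
        have hini_f : G.ini (G.rev e_q) = G.ini e₁ := by
          rw [G.rev_ini, hqt, hiv]
        have hd2 : o (G.rev e_q) = -1 := by rw [horev, heq]
        have hb4u := hb4 _ (G.face_isTwoFace hGKM h3 hini_f hcase)
        obtain ⟨Q, hFB, hQlen, hQhgt⟩ := G.face_boundary o hGKM h3 ho horev hacyclic
          hb4u hini_f hcase he₁ hd2
        rw [G.rev_rev] at hFB
        have hFB' : G.IsFaceBoundary {e : E | FaceMem G e₁ (G.rev e_q) e} v
            (e₁ :: (Q ++ [e_q])) := by rwa [hiv] at hFB
        have hCf : G.ConjFaceLoop v (e₁ :: (Q ++ [e_q])) :=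
          ⟨v, [], e₁ :: (Q ++ [e_q]), _, rfl, hFB', by simp⟩
        -- path structure of the boundary
        have hfQ : G.IsPath (G.ter e₁) v (Q ++ [e_q]) := hFB'.2.2.1.2
        rw [G.isPath_append_iff] at hfQ
        obtain ⟨z₂, hQp, hqp⟩ := hfQ
        have hz₂ : z₂ = z' := by rw [← hqp.1, hqi]
        rw [hz₂] at hQp
        -- the new loop based at z'
        set N : List E := (Q.reverse.map G.rev) ++ M with hN_def
        have hNpath : G.IsPath z' z' N :=
          G.isPath_append (G.isPath_reverse hQp) hM'
        have hmuN : G.mu o N < n := by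
          have e2 : G.mu o N = G.mu o Q + G.mu o M := by
            rw [hN_def, G.mu_append, G.mu_revmap]
          have hQb : G.mu o Q < (Fintype.card E + 1) ^ (G.hgt o (G.ini e₁)) :=
            G.mu_bound o _ Q hQhgt hQlen
          have hwe : (Fintype.card E + 1) ^ (G.hgt o (G.ini e₁)) ≤ G.ewt o e₁ :=
            G.ewt_ge_ini o e₁
          have p2 := G.ewt_pos o e_q
          omega
        obtain ⟨ns, hns, hhomN⟩ := ih z' N hmuN hNpath
        refine ⟨(e₁ :: (Q ++ [e_q])) ::
          ns.map (fun m' => (G.rev e_q) :: (m' ++ [G.rev (G.rev e_q)])), ?_, ?_⟩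
        · intro m'' hm''
          rcases List.mem_cons.1 hm'' with rfl | hm''
          · exact hCf
          rw [List.mem_map] at hm''
          obtain ⟨m', hm', rfl⟩ := hm''
          have hm'' : G.ConjFaceLoop (G.ter (G.rev e_q)) m' := by
            rw [G.rev_ter, hqi]
            exact hns m' hm'
          have := G.conjFaceLoop_cons (G.rev e_q) hm''
          rwa [G.rev_ini, hqt] at this
        · -- l ~ f ++ (ē_q N e_q) ~ f ++ flatten
          have hred : G.Homotopic ((e₁ :: (Q ++ [e_q])) ++
              ([G.rev e_q] ++ N ++ [G.rev (G.rev e_q)])) (e₁ :: (M ++ [e_q]))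
              := by
            have eq1 : (e₁ :: (Q ++ [e_q])) ++
                ([G.rev e_q] ++ N ++ [G.rev (G.rev e_q)])
                = (e₁ :: Q) ++ e_q :: G.rev e_q ::
                  ((Q.reverse.map G.rev) ++ (M ++ [e_q])) := by
              simp [hN_def, G.rev_rev]
            rw [eq1]
            refine (G.homotopic_step (e₁ :: Q)
              ((Q.reverse.map G.rev) ++ (M ++ [e_q])) e_q).trans' G ?_
            have eq2 : (e₁ :: Q) ++ ((Q.reverse.map G.rev) ++ (M ++ [e_q]))
                = [e₁] ++ Q ++ (Q.reverse.map G.rev) ++ (M ++ [e_q]) := by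
              simp
            rw [eq2]
            refine (G.homotopic_cancel_right [e₁] (M ++ [e_q]) Q).trans' G ?_
            have eq3 : [e₁] ++ (M ++ [e_q]) = e₁ :: (M ++ [e_q]) := by simp
            rw [eq3]
            exact Homotopic.refl G _
          refine (hred.symm' G).trans' G ?_
          have step2 : G.Homotopic ([G.rev e_q] ++ N ++ [G.rev (G.rev e_q)])
              ([G.rev e_q] ++ ns.flatten ++ [G.rev (G.rev e_q)]) :=
            hhomN.append_congr G [G.rev e_q] [G.rev (G.rev e_q)]
          have step3 := G.conj_flatten (G.rev e_q) ns
          have step4 := (step2.trans' G step3).append_congr G (e₁ :: (Q ++ [e_q])) []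
          have eq5 : (e₁ :: (Q ++ [e_q])) ++ ([G.rev e_q] ++ N ++ [G.rev (G.rev e_q)]) ++ []
              = (e₁ :: (Q ++ [e_q])) ++ ([G.rev e_q] ++ N ++ [G.rev (G.rev e_q)]) := by simp
          have eq6 : (e₁ :: (Q ++ [e_q])) ++
              ((ns.map (fun m' => (G.rev e_q) :: (m' ++ [G.rev (G.rev e_q)]))).flatten) ++ []
              = ((e₁ :: (Q ++ [e_q])) ::
                ns.map (fun m' => (G.rev e_q) :: (m' ++ [G.rev (G.rev e_q)]))).flatten := by
            simp
          rw [eq5, eq6] at step4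
          exact step4

end Main

end ConnGraph

/-- If a finite unsigned GKM₃ graph carries an acyclic
orientation of its edges such that every 2-face has a unique vertex of index 2
(i.e. `b₄(F,o) = 1`), then the conjugated 2-faces generate the fundamental
group `π₁(Γ, v)` at any base vertex. -/
theorem facesGenerate_of_acyclic_orientation {V E : Type*} [Fintype V]
    [Fintype E] {n k : ℕ}
    (G : ConnGraph V E) (lab : E → Fin k → ℤ)
    (hGKM : IsUnsignedGKM G lab) (hval : G.NValent n) (h3 : IsGKM3 G lab)
    (o : E → ℤ) (ho : ∀ e : E, o e = 1 ∨ o e = -1)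
    (horev : ∀ e : E, o (G.rev e) = -o e)
    (hacyclic : ¬ ∃ (v : V) (l : List E),
      l ≠ [] ∧ G.IsPath v v l ∧ ∀ e ∈ l, o e = 1)
    (hb4 : ∀ F : Set E, G.IsTwoFace F →
      ∃! v : V, {e : E | e ∈ F ∧ G.ini e = v ∧ o e = -1}.ncard = 2) :
    G.FacesGeneratePi1 := by
  intro v l hl
  exact G.main_aux o hGKM h3 ho horev hacyclic hb4 (G.mu o l + 1) v l (by omega) hl
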